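/- arXiv:1909.07934 — 4 statements merged into one kernel-verified Lean document; each statement's English description precedes it below -/
import Mathlib

section
/- Let $y_k : [0,\infty) \to [0,\infty)$, $k = 0,1,2,\dots$, be $C^1$ functions satisfying $y_k'(t) + c_k y_k(t) \le c_k A_k \max\{1, \sup_{t\ge 0} y_{k-1}^2(t)\}$ for all $t > 0$, where $c_k > 0$ and $A_k = \bar a 2^{Dk} \ge 1$ with $\bar a, D > 0$. Suppose there is $K > 0$ with $y_k(0) \le K^{2^k}$ for all $k$. Then for every $m \ge 1$ and all $k \ge m$, $y_k(t) \le (2\bar a)^{2^{k-m+1}-1} \cdot 2^{D(2(2^{k-m}-1) + m 2^{k-m+1} - k)} \cdot \max\{\sup_{t\ge 0} y_{m-1}^{2^{k-m+1}}(t), K^{2^k}, 1\}$. -/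
open Real


lemma ode_max_bound (y : ℝ → ℝ) (c B : ℝ) (hc : 0 < c) (hy : ContDiff ℝ 1 y)
    (h : ∀ t, 0 < t → deriv y t + c * y t ≤ c * B) :
    ∀ t, 0 ≤ t → y t ≤ max (y 0) B := by
  intro t ht
  set g : ℝ → ℝ := fun s => Real.exp (c * s) * (y s - B) with hgdef
  have hy' : Differentiable ℝ y := hy.differentiable one_ne_zero
  have hgd : ∀ s, HasDerivAt g (Real.exp (c * s) * (deriv y s + c * y s - c * B)) s := by
    intro s
    have h1 : HasDerivAt (fun u : ℝ => Real.exp (c * u)) (Real.exp (c * s) * c) s := by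
      simpa [mul_comm, Function.comp_def] using (Real.hasDerivAt_exp (c * s)).comp s ((hasDerivAt_id s).const_mul c)
    have h2 : HasDerivAt (fun u => y u - B) (deriv y s) s := ((hy' s).hasDerivAt).sub_const B
    have h3 : HasDerivAt (fun u => Real.exp (c * u) * (y u - B))
        (Real.exp (c * s) * c * (y s - B) + Real.exp (c * s) * deriv y s) s := h1.mul h2
    convert h3 using 1
    ring
  have hanti : AntitoneOn g (Set.Ici 0) := by
    apply antitoneOn_of_deriv_nonpos (convex_Ici 0)
    · exact (Continuous.mul (Real.continuous_exp.comp (continuous_const.mul continuous_id))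
        ((hy.continuous).sub continuous_const)).continuousOn
    · intro s hs
      exact (hgd s).differentiableAt.differentiableWithinAt
    · intro s hs
      rw [interior_Ici] at hs
      rw [(hgd s).deriv]
      have h4 := h s hs
      have he : 0 < Real.exp (c * s) := Real.exp_pos _
      nlinarith
  have hgle : g t ≤ g 0 := hanti Set.self_mem_Ici ht ht
  rcases le_or_gt (y t) B with hle | hlt
  · exact le_max_of_le_right hle
  · have h1 : (1:ℝ) ≤ Real.exp (c * t) := Real.one_le_exp (by positivity)
    have h5 : y t - B ≤ Real.exp (c * t) * (y t - B) :=
      le_mul_of_one_le_left (by linarith) h1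
    have hg0 : g 0 = y 0 - B := by simp [hgdef]
    have h6 : y t - B ≤ y 0 - B := by
      calc y t - B ≤ g t := h5
        _ ≤ g 0 := hgle
        _ = y 0 - B := hg0
    exact le_max_of_le_left (by linarith)

lemma iSup_sq (f : {t : ℝ // 0 ≤ t} → ℝ) (hf : ∀ t, 0 ≤ f t)
    (hb : BddAbove (Set.range f)) :
    (⨆ t, f t) ^ 2 = ⨆ t, (f t) ^ 2 := by
  haveI hne : Nonempty {t : ℝ // 0 ≤ t} := ⟨⟨0, le_rfl⟩⟩
  have hS : 0 ≤ ⨆ t, f t := Real.iSup_nonneg hf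
  have hb2 : BddAbove (Set.range fun t => (f t)^2) := by
    refine ⟨(⨆ t, f t)^2, ?_⟩
    rintro x ⟨t, rfl⟩
    exact pow_le_pow_left₀ (hf t) (le_ciSup hb t) 2
  have hS2 : 0 ≤ ⨆ t, (f t)^2 := Real.iSup_nonneg fun t => sq_nonneg _
  apply le_antisymm
  · have h1 : (⨆ t, f t) ≤ Real.sqrt (⨆ t, (f t)^2) := by
      apply ciSup_le
      intro t
      rw [show f t = Real.sqrt ((f t)^2) from (Real.sqrt_sq (hf t)).symm]
      exact Real.sqrt_le_sqrt (le_ciSup hb2 t)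
    calc (⨆ t, f t)^2 ≤ Real.sqrt (⨆ t, (f t)^2) ^ 2 :=
          pow_le_pow_left₀ hS h1 2
      _ = ⨆ t, (f t)^2 := Real.sq_sqrt hS2
  · exact ciSup_le fun t => pow_le_pow_left₀ (hf t) (le_ciSup hb t) 2

lemma sq_max (a b : ℝ) (ha : 0 ≤ a) (hb : 0 ≤ b) : max a b ^ 2 = max (a^2) (b^2) := by
  rcases le_total a b with h | h
  · rw [max_eq_right h, max_eq_right (pow_le_pow_left₀ ha h 2)]
  · rw [max_eq_left h, max_eq_left (pow_le_pow_left₀ hb h 2)]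

/-- Moser-type iteration lemma (Lemma 2.2 of the paper). -/
theorem stmt_0 (y : ℕ → ℝ → ℝ) (c : ℕ → ℝ) (abar D K : ℝ)
    (habar : 0 < abar) (hD : 0 < D) (hK : 0 < K)
    (hy_nonneg : ∀ k t, 0 ≤ t → 0 ≤ y k t)
    (hyC1 : ∀ k, ContDiff ℝ 1 (y k))
    (hc : ∀ k, 0 < c k)
    (hA : ∀ k : ℕ, (1 : ℝ) ≤ abar * 2 ^ (D * k))
    (hbdd : ∀ k, BddAbove (Set.range fun t : {t : ℝ // 0 ≤ t} => y k t.1))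
    (hineq : ∀ k : ℕ, 1 ≤ k → ∀ t : ℝ, 0 < t →
        deriv (y k) t + c k * y k t ≤
          c k * (abar * 2 ^ (D * k)) *
            max 1 (⨆ t' : {t : ℝ // 0 ≤ t}, (y (k - 1) t'.1) ^ 2))
    (hy0 : ∀ k : ℕ, y k 0 ≤ K ^ (2 ^ k : ℕ)) :
    ∀ m k : ℕ, 1 ≤ m → m ≤ k → ∀ t : ℝ, 0 ≤ t →
      y k t ≤ (2 * abar) ^ (2 ^ (k - m + 1) - 1 : ℕ) *
          2 ^ (D * (2 * ((2 : ℝ) ^ (k - m : ℕ) - 1) + m * 2 ^ (k - m + 1 : ℕ) - k)) *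
          max (⨆ t' : {t : ℝ // 0 ≤ t}, (y (m - 1) t'.1) ^ (2 ^ (k - m + 1) : ℕ))
            (max (K ^ (2 ^ k : ℕ)) 1) := by
  haveI hne : Nonempty {t : ℝ // 0 ≤ t} := ⟨⟨0, le_rfl⟩⟩
  have habar1 : (1:ℝ) ≤ abar := by simpa using hA 0
  have hbddp : ∀ k p : ℕ, BddAbove (Set.range fun t' : {t : ℝ // 0 ≤ t} => y k t'.1 ^ p) := by
    intro k p
    obtain ⟨M, hM⟩ := hbdd k
    refine ⟨M ^ p, ?_⟩
    rintro x ⟨t, rfl⟩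
    exact pow_le_pow_left₀ (hy_nonneg k t.1 t.2) (hM ⟨t, rfl⟩) p
  have key1 : ∀ k : ℕ, 1 ≤ k → ∀ t : ℝ, 0 ≤ t →
      y k t ≤ 2 * (abar * 2 ^ (D * k)) *
        max (⨆ t' : {t : ℝ // 0 ≤ t}, (y (k - 1) t'.1) ^ 2) (max (K ^ (2 ^ k : ℕ)) 1) := by
    intro k hk t ht
    set S := ⨆ t' : {t : ℝ // 0 ≤ t}, (y (k - 1) t'.1) ^ 2 with hSdef
    set A := abar * 2 ^ (D * k) with hAdef
    have hA' : (1:ℝ) ≤ A := hA k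
    have hode := ode_max_bound (y k) (c k) (A * max 1 S) (hc k) (hyC1 k)
      (fun s hs => by
        have h5 := hineq k hk s hs
        calc deriv (y k) s + c k * y k s ≤ c k * A * max 1 S := h5
          _ = c k * (A * max 1 S) := by ring) t ht
    have hS0 : 0 ≤ S := Real.iSup_nonneg fun t' => sq_nonneg _
    have hR1 : (1:ℝ) ≤ max S (max (K ^ (2 ^ k : ℕ)) 1) := le_max_of_le_right (le_max_right _ _)
    have hRS : S ≤ max S (max (K ^ (2 ^ k : ℕ)) 1) := le_max_left _ _
    have hRK : K ^ (2 ^ k : ℕ) ≤ max S (max (K ^ (2 ^ k : ℕ)) 1) :=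
      le_max_of_le_right (le_max_left _ _)
    have hM1 : max 1 S ≤ max S (max (K ^ (2 ^ k : ℕ)) 1) := max_le hR1 hRS
    refine hode.trans (max_le ?_ ?_)
    · have h6 := hy0 k
      nlinarith
    · nlinarith
  intro m k hm hmk
  obtain ⟨j, rfl⟩ : ∃ j, k = m + j := ⟨k - m, by omega⟩
  clear hmk
  simp only [Nat.add_sub_cancel_left]
  induction j with
  | zero =>
    intro t ht
    simp only [Nat.add_zero]
    rw [show (2:ℕ) ^ (0 + 1) = 2 by norm_num]
    rw [show ((2:ℝ) * abar) ^ (2 - 1 : ℕ) = 2 * abar by norm_num]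
    rw [show D * (2 * ((2:ℝ) ^ (0:ℕ) - 1) + (m:ℝ) * 2 ^ (0 + 1 : ℕ) - (m:ℝ)) = D * (m:ℝ) by
      push_cast; ring_nf]
    have h1 := key1 m hm t ht
    calc y m t ≤ 2 * (abar * 2 ^ (D * (m:ℝ))) *
          max (⨆ t' : {t : ℝ // 0 ≤ t}, (y (m - 1) t'.1) ^ 2) (max (K ^ (2 ^ m : ℕ)) 1) := h1
      _ = 2 * abar * 2 ^ (D * (m:ℝ)) *
          max (⨆ t' : {t : ℝ // 0 ≤ t}, (y (m - 1) t'.1) ^ 2) (max (K ^ (2 ^ m : ℕ)) 1) := by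
            ring
  | succ j ih =>
    intro t ht
    set Cj : ℝ := (2 * abar) ^ (2 ^ (j + 1) - 1 : ℕ) *
        2 ^ (D * (2 * ((2 : ℝ) ^ (j : ℕ) - 1) + m * 2 ^ (j + 1 : ℕ) - (m + j : ℕ))) with hCjdef
    set Nj : ℝ := max (⨆ t' : {t : ℝ // 0 ≤ t}, (y (m - 1) t'.1) ^ (2 ^ (j + 1) : ℕ))
        (max (K ^ (2 ^ (m + j) : ℕ)) 1) with hNjdef
    have hSsup0 : 0 ≤ ⨆ t' : {t : ℝ // 0 ≤ t}, (y (m - 1) t'.1) ^ (2 ^ (j + 1) : ℕ) :=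
      Real.iSup_nonneg fun t' => pow_nonneg (hy_nonneg _ _ t'.2) _
    have hNj1 : (1:ℝ) ≤ Nj := le_max_of_le_right (le_max_right _ _)
    have h2abar : (1:ℝ) ≤ 2 * abar := by linarith
    have hCj1 : (1:ℝ) ≤ Cj := by
      have e1 : (1:ℝ) ≤ (2 * abar) ^ (2 ^ (j + 1) - 1 : ℕ) := one_le_pow₀ h2abar
      have e2 : (0:ℝ) ≤ D * (2 * ((2 : ℝ) ^ (j : ℕ) - 1) + m * 2 ^ (j + 1 : ℕ) - (m + j : ℕ)) := by
        have hX : (0:ℝ) ≤ 2 * ((2 : ℝ) ^ (j : ℕ) - 1) + m * 2 ^ (j + 1 : ℕ) - ((m + j : ℕ):ℝ) := by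
          have hj : (j:ℝ) + 1 < 2 ^ (j + 1) := by exact_mod_cast (Nat.lt_two_pow_self (n := j + 1))
          have hm1 : (1:ℝ) ≤ (m:ℝ) := by exact_mod_cast hm
          have h2j : (1:ℝ) ≤ (2:ℝ) ^ (j:ℕ) := one_le_pow₀ one_le_two
          have h2j1 : (2:ℝ) ^ (j + 1 : ℕ) = 2 * 2 ^ (j:ℕ) := by ring
          push_cast
          push_cast at hj
          nlinarith [mul_nonneg (sub_nonneg.2 hm1) (by nlinarith : (0:ℝ) ≤ 2 * 2 ^ (j:ℕ) - 1)]
        exact mul_nonneg hD.le hX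
      have e3 : (1:ℝ) ≤ (2:ℝ) ^
          (D * (2 * ((2 : ℝ) ^ (j : ℕ) - 1) + m * 2 ^ (j + 1 : ℕ) - (m + j : ℕ))) :=
        Real.one_le_rpow one_le_two e2
      rw [hCjdef]
      nlinarith
    -- sup of squares bound from IH
    have hsupsq : (⨆ t' : {t : ℝ // 0 ≤ t}, (y (m + j) t'.1) ^ 2) ≤ Cj ^ 2 * Nj ^ 2 := by
      have h7 : ∀ t' : {t : ℝ // 0 ≤ t}, (y (m + j) t'.1) ^ 2 ≤ (Cj * Nj) ^ 2 := fun t' =>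
        pow_le_pow_left₀ (hy_nonneg _ _ t'.2) (ih t'.1 t'.2) 2
      calc (⨆ t' : {t : ℝ // 0 ≤ t}, (y (m + j) t'.1) ^ 2) ≤ (Cj * Nj) ^ 2 := ciSup_le h7
        _ = Cj ^ 2 * Nj ^ 2 := by ring
    -- Nj ^ 2 is the next-level max
    have hNsq : Nj ^ 2 =
        max (⨆ t' : {t : ℝ // 0 ≤ t}, (y (m - 1) t'.1) ^ (2 ^ (j + 1 + 1) : ℕ))
          (max (K ^ (2 ^ (m + (j + 1)) : ℕ)) 1) := by
      have hK0 : (0:ℝ) ≤ max (K ^ (2 ^ (m + j) : ℕ)) 1 := le_max_of_le_right zero_le_one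
      rw [hNjdef, sq_max _ _ hSsup0 hK0, sq_max _ _ (pow_nonneg hK.le _) zero_le_one, one_pow,
        iSup_sq _ (fun t' => pow_nonneg (hy_nonneg _ _ t'.2) _) (hbddp (m - 1) _)]
      have e1 : (⨆ t' : {t : ℝ // 0 ≤ t}, ((y (m - 1) t'.1) ^ (2 ^ (j + 1) : ℕ)) ^ 2)
          = ⨆ t' : {t : ℝ // 0 ≤ t}, (y (m - 1) t'.1) ^ (2 ^ (j + 1 + 1) : ℕ) :=
        iSup_congr fun t' => by rw [← pow_mul, pow_succ 2 (j + 1)]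
      have e2 : (K ^ (2 ^ (m + j) : ℕ)) ^ 2 = K ^ (2 ^ (m + (j + 1)) : ℕ) := by
        rw [← pow_mul, show m + (j + 1) = (m + j) + 1 from rfl, pow_succ]
      rw [e1, e2]
    -- constant recursion identity
    have hconst : 2 * (abar * 2 ^ (D * ((m + (j + 1) : ℕ):ℝ))) * Cj ^ 2 =
        (2 * abar) ^ (2 ^ (j + 1 + 1) - 1 : ℕ) *
          2 ^ (D * (2 * ((2 : ℝ) ^ (j + 1 : ℕ) - 1) + m * 2 ^ (j + 1 + 1 : ℕ) - (m + (j + 1) : ℕ))) := by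
      have h2 : (2:ℕ) ^ (j + 1 + 1) - 1 = (2 ^ (j + 1) - 1) * 2 + 1 := by
        have h3 : (1:ℕ) ≤ 2 ^ (j + 1) := Nat.one_le_two_pow
        have h4 : (2:ℕ) ^ (j + 1 + 1) = 2 ^ (j + 1) * 2 := pow_succ 2 (j + 1)
        omega
      have h5 : D * (2 * ((2 : ℝ) ^ (j + 1 : ℕ) - 1) + m * 2 ^ (j + 1 + 1 : ℕ) - ((m + (j + 1) : ℕ):ℝ))
          = D * ((m + (j + 1) : ℕ):ℝ) +
            (D * (2 * ((2 : ℝ) ^ (j : ℕ) - 1) + m * 2 ^ (j + 1 : ℕ) - ((m + j : ℕ):ℝ)) +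
             D * (2 * ((2 : ℝ) ^ (j : ℕ) - 1) + m * 2 ^ (j + 1 : ℕ) - ((m + j : ℕ):ℝ))) := by
        push_cast
        ring
      rw [h2, h5, pow_succ (2 * abar) ((2 ^ (j + 1) - 1) * 2),
        pow_mul (2 * abar) (2 ^ (j + 1) - 1) 2, Real.rpow_add two_pos, Real.rpow_add two_pos, hCjdef]
      ring
    -- put it together
    have h1 := key1 (m + (j + 1)) (by omega) t ht
    rw [show m + (j + 1) - 1 = m + j from by omega] at h1
    have hmax : max (⨆ t' : {t : ℝ // 0 ≤ t}, (y (m + j) t'.1) ^ 2)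
        (max (K ^ (2 ^ (m + (j + 1)) : ℕ)) 1) ≤ Cj ^ 2 * Nj ^ 2 := by
      refine max_le hsupsq ?_
      have h8 : max (K ^ (2 ^ (m + (j + 1)) : ℕ)) 1 ≤ Nj ^ 2 := by
        rw [hNsq]; exact le_max_right _ _
      have h9 : (0:ℝ) ≤ Nj ^ 2 := sq_nonneg _
      calc max (K ^ (2 ^ (m + (j + 1)) : ℕ)) 1 ≤ Nj ^ 2 := h8
        _ ≤ Cj ^ 2 * Nj ^ 2 := le_mul_of_one_le_left h9 (by nlinarith)
    calc y (m + (j + 1)) t ≤ 2 * (abar * 2 ^ (D * ((m + (j + 1) : ℕ):ℝ))) *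
          max (⨆ t' : {t : ℝ // 0 ≤ t}, (y (m + j) t'.1) ^ 2)
            (max (K ^ (2 ^ (m + (j + 1)) : ℕ)) 1) := h1
      _ ≤ 2 * (abar * 2 ^ (D * ((m + (j + 1) : ℕ):ℝ))) * (Cj ^ 2 * Nj ^ 2) := by
          have hA1 : (1:ℝ) ≤ abar * 2 ^ (D * ((m + (j + 1) : ℕ):ℝ)) := hA (m + (j + 1))
          apply mul_le_mul_of_nonneg_left hmax
          nlinarith
      _ = (2 * (abar * 2 ^ (D * ((m + (j + 1) : ℕ):ℝ))) * Cj ^ 2) * Nj ^ 2 := by ring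
      _ = _ := by rw [hconst, hNsq]
end

section
/- Let $N > 2$, $s = \frac{2N}{N-2}$, $\beta > 0$, and $1 \le \alpha < 1 + \frac{2\beta}{N}$. Then for every $p \ge \max\{\beta+1-\alpha, 1\}$, $\frac{sp - 2(p+\alpha-1)}{s(p-\alpha+1+\beta) - 2(p+\alpha-1+\beta)} < 1$, and moreover $s(\beta+1-\alpha) - 2\beta > 0$. -/
theorem stmt_5 (N : ℕ) (hN : 2 < N) (s β α : ℝ)
    (hs : s = 2 * N / (N - 2)) (hβ : 0 < β)
    (hα : 1 ≤ α) (hα' : α < 1 + 2 * β / N) :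
    (∀ p : ℝ, max (β + 1 - α) 1 ≤ p →
        (s * p - 2 * (p + α - 1)) /
            (s * (p - α + 1 + β) - 2 * (p + α - 1 + β)) < 1) ∧
      0 < s * (β + 1 - α) - 2 * β := by
  have hn : (2:ℝ) < (N:ℝ) := by exact_mod_cast hN
  have hn0 : (0:ℝ) < (N:ℝ) := by linarith
  have hn2 : (0:ℝ) < (N:ℝ) - 2 := by linarith
  have hα2 : (α - 1) * N < 2 * β := by
    have h : α - 1 < 2 * β / N := by linarith
    calc (α - 1) * N < (2 * β / N) * N := by
          exact mul_lt_mul_of_pos_right h hn0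
      _ = 2 * β := by field_simp
  have hsN : s * ((N:ℝ) - 2) = 2 * N := by
    rw [hs]; field_simp
  have hs2 : 2 < s := by nlinarith
  have hK : 0 < s * (β + 1 - α) - 2 * β := by nlinarith
  refine ⟨?_, hK⟩
  intro p hp
  have hpb : β + 1 - α ≤ p := le_trans (le_max_left _ _) hp
  have hp1 : (1:ℝ) ≤ p := le_trans (le_max_right _ _) hp
  have hnum : 0 < s * p - 2 * (p + α - 1) := by
    nlinarith [mul_nonneg (le_of_lt (sub_pos.mpr hs2)) (sub_nonneg.mpr hpb)]
  have hden : s * (p - α + 1 + β) - 2 * (p + α - 1 + β)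
      = (s * p - 2 * (p + α - 1)) + (s * (β + 1 - α) - 2 * β) := by ring
  have hdpos : 0 < s * (p - α + 1 + β) - 2 * (p + α - 1 + β) := by
    rw [hden]; linarith
  rw [div_lt_one hdpos]
  linarith
end

section
/- Let $\alpha \ge 1$, $\beta > 0$, $s > 2$, and define $p_k = 2^k + h$ with $h = \frac{2(s-1)(\alpha-1)}{s-2}$. For $k \ge 1$ set $r_k = \frac{2 p_{k-1}}{p_k}$, $\lambda_k = \frac{\frac{p_k}{2(p_k+\alpha-1)} - \frac{p_k}{2 p_{k-1}}}{\frac{1}{s} - \frac{p_k}{2 p_{k-1}}}$, and $Q_k = \frac{2(1-\lambda_k)(p_k+\alpha-1)}{p_k - \lambda_k(p_k+\alpha-1)}$. Then $\frac{Q_k}{r_k} = 2$ for every $k \ge 1$. -/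
theorem stmt_6 (α β s h : ℝ) (hα : 1 ≤ α) (hβ : 0 < β) (hs : 2 < s)
    (hh : h = 2 * (s - 1) * (α - 1) / (s - 2))
    (p : ℕ → ℝ) (hp : ∀ k : ℕ, p k = 2 ^ k + h)
    (r lam Q : ℕ → ℝ)
    (hr : ∀ k : ℕ, 1 ≤ k → r k = 2 * p (k - 1) / p k)
    (hlam : ∀ k : ℕ, 1 ≤ k →
      lam k = (p k / (2 * (p k + α - 1)) - p k / (2 * p (k - 1))) /
        (1 / s - p k / (2 * p (k - 1))))
    (hQ : ∀ k : ℕ, 1 ≤ k →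
      Q k = 2 * (1 - lam k) * (p k + α - 1) / (p k - lam k * (p k + α - 1))) :
    ∀ k : ℕ, 1 ≤ k → Q k / r k = 2 := by
  rintro k hk
  obtain ⟨m, rfl⟩ : ∃ m, k = m + 1 := ⟨k - 1, (Nat.succ_pred_eq_of_pos hk).symm⟩
  have hkm : m + 1 - 1 = m := rfl
  have ha1 : (1:ℝ) ≤ 2 ^ m := one_le_pow₀ (by norm_num)
  have ha0 : (0:ℝ) < 2 ^ m := by positivity
  have ht : (0:ℝ) ≤ α - 1 := by linarith
  have hs2 : (0:ℝ) < s - 2 := by linarith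
  have hs0 : (0:ℝ) < s := by linarith
  have hh0 : 0 ≤ h := by
    rw [hh]; apply div_nonneg _ hs2.le; nlinarith
  have hP' : p m = 2 ^ m + h := hp m
  have hP : p (m + 1) = 2 * 2 ^ m + h := by rw [hp]; ring
  have hP'0 : 0 < p m := by rw [hP']; linarith
  have hP0 : 0 < p (m + 1) := by rw [hP]; linarith
  have hA0 : 0 < p (m + 1) + α - 1 := by linarith
  have hD0 : 0 < s * p (m + 1) - 2 * p m := by
    have h2 : 2 * p m < 2 * p (m + 1) := by rw [hP, hP']; linarith
    nlinarith
  have h1 : 1 / s - p (m + 1) / (2 * p m) ≠ 0 := by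
    have heq : 1 / s - p (m + 1) / (2 * p m)
        = -(s * p (m + 1) - 2 * p m) / (s * (2 * p m)) := by
      field_simp
      ring
    rw [heq]
    exact div_ne_zero (by linarith) (by positivity)
  -- closed form for lam, pure algebra in the atoms p m, p (m+1)
  have hlamval : lam (m + 1)
      = s * p (m + 1) * (p (m + 1) - p m + α - 1) /
        ((p (m + 1) + α - 1) * (s * p (m + 1) - 2 * p m)) := by
    rw [hlam (m + 1) (by norm_num), hkm]
    rw [div_eq_div_iff h1 (by positivity)]
    field_simp
    ring
  have hden : p (m + 1) - lam (m + 1) * (p (m + 1) + α - 1)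
      = p (m + 1) * ((s - 2) * p m - s * (α - 1)) / (s * p (m + 1) - 2 * p m) := by
    rw [hlamval]
    have h3 : p (m + 1) * s - p m * 2 ≠ 0 := by linarith
    have h4 : s * p (m + 1) - p m * 2 ≠ 0 := by linarith
    field_simp
    ring
  have honeminus : 1 - lam (m + 1)
      = p m * ((s - 2) * p (m + 1) - 2 * (α - 1)) /
        ((p (m + 1) + α - 1) * (s * p (m + 1) - 2 * p m)) := by
    rw [hlamval]
    have h3 : p (m + 1) * s - p m * 2 ≠ 0 := by linarith
    have h4 : s * p (m + 1) - p m * 2 ≠ 0 := by linarith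
    field_simp
    ring
  -- the two key quantities, and where the choice of h enters
  have hF : (s - 2) * p m - s * (α - 1) = (s - 2) * (2 ^ m + α - 1) := by
    rw [hP', hh]; field_simp; ring
  have hF0 : 0 < (s - 2) * p m - s * (α - 1) := by
    rw [hF]; apply mul_pos hs2; linarith
  have hG : (s - 2) * p (m + 1) - 2 * (α - 1)
      = 2 * ((s - 2) * p m - s * (α - 1)) := by
    rw [hP, hP', hh]; field_simp; ring
  rw [hQ (m + 1) (by norm_num), hr (m + 1) (by norm_num), hkm, hden, honeminus, hG]
  generalize (s - 2) * p m - s * (α - 1) = F at hF0 ⊢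
  have h5 : p (m + 1) * s - 2 * p m ≠ 0 := by linarith
  field_simp
end

section
/- Let $\delta > 0$, $x \in \mathbb{R}^N$, let $B(x,\delta)$ be the cube $\{y : |y_i - x_i| \le \delta\}$, let $J : \mathbb{R}^N \to [0,\infty)$ be measurable with $\int_{B(0,2\delta)} |z|^2 J(z)\, dz \le (2\delta)^2 \int_{\mathbb{R}^N} J$, with $\int_{\mathbb{R}^N} J = 1$, and let $v \in C^1(\mathbb{R}^N)$. Then $\int_{B(x,\delta)} \int_{B(x,\delta)} (v(y) - v(z))^2 J(z-y)\, dz\, dy \le (2\delta)^2 \int_{B(x,\delta)} |\nabla v(y)|^2 dy$. -/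
open Real MeasureTheory Set
open scoped ENNReal

namespace Stmt12Aux

variable {N : ℕ}

lemma isClosed_cube (x : EuclideanSpace ℝ (Fin N)) (δ : ℝ) :
    IsClosed {y : EuclideanSpace ℝ (Fin N) | ∀ i, |y i - x i| ≤ δ} := by
  have h : {y : EuclideanSpace ℝ (Fin N) | ∀ i, |y i - x i| ≤ δ}
      = ⋂ i, {y : EuclideanSpace ℝ (Fin N) | |y i - x i| ≤ δ} := by
    ext y; simp
  rw [h]
  refine isClosed_iInter fun i => ?_
  have h1 : Continuous (fun y : EuclideanSpace ℝ (Fin N) => y i) :=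
    (EuclideanSpace.proj i : EuclideanSpace ℝ (Fin N) →L[ℝ] ℝ).continuous
  exact isClosed_le ((h1.sub continuous_const).abs) continuous_const

lemma isCompact_cube (x : EuclideanSpace ℝ (Fin N)) (δ : ℝ) :
    IsCompact {y : EuclideanSpace ℝ (Fin N) | ∀ i, |y i - x i| ≤ δ} := by
  apply Metric.isCompact_of_isClosed_isBounded (isClosed_cube x δ)
  apply (Metric.isBounded_closedBall (x := x) (r := Real.sqrt (N * δ^2))).subset
  intro y hy
  simp only [Metric.mem_closedBall]
  rw [EuclideanSpace.dist_eq]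
  apply Real.sqrt_le_sqrt
  calc ∑ i, dist (y i) (x i) ^ 2 ≤ ∑ _i : Fin N, δ^2 := by
        apply Finset.sum_le_sum
        intro i _
        have := hy i
        rw [Real.dist_eq]
        nlinarith [abs_nonneg (y i - x i), sq_abs (y i - x i)]
    _ = N * δ^2 := by simp [mul_comm]

lemma lintegral_sq_cs {h : ℝ → ℝ≥0∞} (hm : Measurable h) :
    (∫⁻ θ in Ioc (0:ℝ) 1, h θ) ^ 2 ≤ ∫⁻ θ in Ioc (0:ℝ) 1, h θ ^ 2 := by
  have hconj : Real.HolderConjugate 2 2 := Real.HolderConjugate.two_two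
  have hCS := ENNReal.lintegral_mul_le_Lp_mul_Lq (volume.restrict (Ioc (0:ℝ) 1)) hconj
    hm.aemeasurable (aemeasurable_const (b := (1:ℝ≥0∞)))
  simp only [Pi.mul_apply, mul_one, ENNReal.one_rpow, lintegral_const,
    Measure.restrict_apply MeasurableSet.univ, Set.univ_inter, Real.volume_Ioc] at hCS
  norm_num at hCS
  calc (∫⁻ θ in Ioc (0:ℝ) 1, h θ) ^ 2
      ≤ ((∫⁻ θ in Ioc (0:ℝ) 1, h θ ^ 2) ^ (1/2 : ℝ)) ^ 2 := by
        exact pow_le_pow_left₀ zero_le hCS 2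
    _ = ∫⁻ θ in Ioc (0:ℝ) 1, h θ ^ 2 := by
        rw [← ENNReal.rpow_natCast _ 2, ← ENNReal.rpow_mul]
        norm_num

lemma pointwise_bound {v : EuclideanSpace ℝ (Fin N) → ℝ} (hv : ContDiff ℝ 1 v)
    (y z : EuclideanSpace ℝ (Fin N)) :
    ENNReal.ofReal ((v y - v z) ^ 2) ≤
      ENNReal.ofReal (‖z - y‖ ^ 2) *
        ∫⁻ θ in Ioc (0:ℝ) 1, ENNReal.ofReal (‖fderiv ℝ v (y + θ • (z - y))‖ ^ 2) := by
  set w := z - y with hw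
  set c : ℝ → EuclideanSpace ℝ (Fin N) := fun θ => y + θ • w with hc
  set d : ℝ → ℝ := fun θ => (fderiv ℝ v (c θ)) w with hd
  have hcont : Continuous (fderiv ℝ v) := hv.continuous_fderiv one_ne_zero
  have hccont : Continuous c := continuous_const.add (continuous_id.smul continuous_const)
  have hdcont : Continuous d := (hcont.comp hccont).clm_apply continuous_const
  have hderiv : ∀ θ ∈ uIcc (0:ℝ) 1, HasDerivAt (fun t => v (c t)) (d θ) θ := by
    intro θ _
    have h1 : HasDerivAt c w θ := by
      simpa only [one_smul, id] using ((hasDerivAt_id θ).smul_const w).const_add y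
    exact ((hv.differentiable one_ne_zero) (c θ)).hasFDerivAt.comp_hasDerivAt θ h1
  have hftc : ∫ θ in (0:ℝ)..1, d θ = v (c 1) - v (c 0) :=
    intervalIntegral.integral_eq_sub_of_hasDerivAt hderiv
      (hdcont.intervalIntegrable 0 1)
  have hc1 : c 1 = z := by simp [hc, hw]
  have hc0 : c 0 = y := by simp [hc]
  have heq : (v y - v z) ^ 2 = (∫ θ in Ioc (0:ℝ) 1, d θ) ^ 2 := by
    rw [← intervalIntegral.integral_of_le zero_le_one, hftc, hc1, hc0]; ring
  set h : ℝ → ℝ≥0∞ := fun θ => ENNReal.ofReal |d θ| with hh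
  have hhm : Measurable h := (hdcont.abs.measurable).ennreal_ofReal
  have h1 : ENNReal.ofReal ((v y - v z) ^ 2)
      = (ENNReal.ofReal |∫ θ in Ioc (0:ℝ) 1, d θ|) ^ 2 := by
    rw [heq, ← ENNReal.ofReal_pow (abs_nonneg _), sq_abs]
  have h2 : ENNReal.ofReal |∫ θ in Ioc (0:ℝ) 1, d θ| ≤ ∫⁻ θ in Ioc (0:ℝ) 1, h θ := by
    have habs : |∫ θ in Ioc (0:ℝ) 1, d θ| ≤ ∫ θ in Ioc (0:ℝ) 1, |d θ| := by
      simpa [Real.norm_eq_abs] using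
        norm_integral_le_integral_norm (μ := volume.restrict (Ioc (0:ℝ) 1)) d
    have heq2 : (∫ θ in Ioc (0:ℝ) 1, |d θ|)
        = (∫⁻ θ in Ioc (0:ℝ) 1, h θ).toReal := by
      exact integral_eq_lintegral_of_nonneg_ae (ae_of_all _ fun θ => abs_nonneg _)
        (hdcont.abs.aestronglyMeasurable)
    calc ENNReal.ofReal |∫ θ in Ioc (0:ℝ) 1, d θ|
        ≤ ENNReal.ofReal (∫ θ in Ioc (0:ℝ) 1, |d θ|) := ENNReal.ofReal_le_ofReal habs
      _ ≤ ∫⁻ θ in Ioc (0:ℝ) 1, h θ := by rw [heq2]; exact ENNReal.ofReal_toReal_le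
  have h4 : ∀ θ, h θ ^ 2
      ≤ ENNReal.ofReal (‖w‖ ^ 2) * ENNReal.ofReal (‖fderiv ℝ v (c θ)‖ ^ 2) := by
    intro θ
    have hb : |d θ| ≤ ‖fderiv ℝ v (c θ)‖ * ‖w‖ := by
      simpa [Real.norm_eq_abs] using (fderiv ℝ v (c θ)).le_opNorm w
    calc h θ ^ 2 = ENNReal.ofReal (|d θ| ^ 2) := (ENNReal.ofReal_pow (abs_nonneg _) 2).symm
      _ ≤ ENNReal.ofReal ((‖fderiv ℝ v (c θ)‖ * ‖w‖) ^ 2) := by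
          apply ENNReal.ofReal_le_ofReal
          exact pow_le_pow_left₀ (abs_nonneg _) hb 2
      _ = ENNReal.ofReal (‖w‖ ^ 2) * ENNReal.ofReal (‖fderiv ℝ v (c θ)‖ ^ 2) := by
          rw [mul_pow, ← ENNReal.ofReal_mul (by positivity), mul_comm]
  calc ENNReal.ofReal ((v y - v z) ^ 2)
      = (ENNReal.ofReal |∫ θ in Ioc (0:ℝ) 1, d θ|) ^ 2 := h1
    _ ≤ (∫⁻ θ in Ioc (0:ℝ) 1, h θ) ^ 2 := pow_le_pow_left₀ zero_le h2 2
    _ ≤ ∫⁻ θ in Ioc (0:ℝ) 1, h θ ^ 2 := lintegral_sq_cs hhm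
    _ ≤ ∫⁻ θ in Ioc (0:ℝ) 1,
          ENNReal.ofReal (‖w‖ ^ 2) * ENNReal.ofReal (‖fderiv ℝ v (c θ)‖ ^ 2) :=
        lintegral_mono h4
    _ = ENNReal.ofReal (‖w‖ ^ 2) *
          ∫⁻ θ in Ioc (0:ℝ) 1, ENNReal.ofReal (‖fderiv ℝ v (c θ)‖ ^ 2) := by
        apply lintegral_const_mul
        exact ((hcont.comp hccont).norm.pow 2).measurable.ennreal_ofReal

end Stmt12Aux

open Stmt12Aux

set_option maxHeartbeats 1000000 in
/-- Nonlocal dissipation gradient estimate (3.4)-(3.6). -/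
theorem stmt_12 (N : ℕ) (δ : ℝ) (hδ : 0 < δ)
    (x : EuclideanSpace ℝ (Fin N))
    (J : EuclideanSpace ℝ (Fin N) → ℝ)
    (hJ_meas : Measurable J) (hJ_nonneg : ∀ z, 0 ≤ J z)
    (hJ_tot : ∫ z, J z = 1) (hJ_int : Integrable J)
    (hJ_mom : ∫ z in {z : EuclideanSpace ℝ (Fin N) | ∀ i, |z i| ≤ 2 * δ},
        ‖z‖ ^ 2 * J z ≤ (2 * δ) ^ 2 * ∫ z, J z)
    (v : EuclideanSpace ℝ (Fin N) → ℝ) (hv : ContDiff ℝ 1 v) :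
    ∫ y in {y : EuclideanSpace ℝ (Fin N) | ∀ i, |y i - x i| ≤ δ},
        ∫ z in {z : EuclideanSpace ℝ (Fin N) | ∀ i, |z i - x i| ≤ δ},
          (v y - v z) ^ 2 * J (z - y) ≤
      (2 * δ) ^ 2 *
        ∫ y in {y : EuclideanSpace ℝ (Fin N) | ∀ i, |y i - x i| ≤ δ},
          ‖fderiv ℝ v y‖ ^ 2 := by
  classical
  set Q : Set (EuclideanSpace ℝ (Fin N)) := {y | ∀ i, |y i - x i| ≤ δ} with hQdef
  set Q2 : Set (EuclideanSpace ℝ (Fin N)) := {w | ∀ i, |w i| ≤ 2 * δ} with hQ2def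
  have hQm : MeasurableSet Q := (isClosed_cube x δ).measurableSet
  have hQ2m : MeasurableSet Q2 := by
    have h := (isClosed_cube (0 : EuclideanSpace ℝ (Fin N)) (2 * δ)).measurableSet
    have : {y : EuclideanSpace ℝ (Fin N) | ∀ i, |y i - (0:EuclideanSpace ℝ (Fin N)) i| ≤ 2*δ}
        = Q2 := by ext w; simp [hQ2def]
    rwa [this] at h
  have hQc : IsCompact Q := isCompact_cube x δ
  have hcont : Continuous (fderiv ℝ v) := hv.continuous_fderiv one_ne_zero
  set g : EuclideanSpace ℝ (Fin N) → ℝ≥0∞ :=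
    fun u => ENNReal.ofReal (‖fderiv ℝ v u‖ ^ 2) with hg
  have hgc : Continuous g := ENNReal.continuous_ofReal.comp (hcont.norm.pow 2)
  set G : ℝ≥0∞ := ∫⁻ u in Q, g u with hGdef
  set R : ℝ := ∫ u in Q, ‖fderiv ℝ v u‖ ^ 2 with hRdef
  have hRint : IntegrableOn (fun u => ‖fderiv ℝ v u‖ ^ 2) Q volume :=
    (hcont.norm.pow 2).continuousOn.integrableOn_compact hQc
  have hRnn : 0 ≤ R := setIntegral_nonneg hQm fun u _ => by positivity
  have hGR : G = ENNReal.ofReal R :=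
    (ofReal_integral_eq_lintegral_ofReal hRint (ae_of_all _ fun u => by positivity)).symm
  have hGne : G ≠ ⊤ := by rw [hGR]; exact ENNReal.ofReal_ne_top
  set j : EuclideanSpace ℝ (Fin N) → ℝ≥0∞ := fun w => ENNReal.ofReal (J w) with hj
  have hjm : Measurable j := hJ_meas.ennreal_ofReal
  set n : EuclideanSpace ℝ (Fin N) → ℝ≥0∞ := fun w => ENNReal.ofReal (‖w‖ ^ 2) with hn
  have hnm : Measurable n := (continuous_norm.pow 2).measurable.ennreal_ofReal
  have hnjne : ∀ w, n w * j w ≠ ⊤ := fun w =>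
    ENNReal.mul_ne_top ENNReal.ofReal_ne_top ENNReal.ofReal_ne_top
  set φ : EuclideanSpace ℝ (Fin N) → EuclideanSpace ℝ (Fin N) → ℝ≥0∞ :=
    fun y z => ENNReal.ofReal ((v y - v z) ^ 2 * J (z - y)) with hφ
  have hφm : Measurable (Function.uncurry φ) := by
    apply Measurable.ennreal_ofReal
    apply Measurable.mul
    · exact ((hv.continuous.comp continuous_fst).sub
        (hv.continuous.comp continuous_snd)).measurable.pow_const 2
    · exact hJ_meas.comp (measurable_snd.sub measurable_fst)
  -- moment bound
  have hint2 : IntegrableOn (fun w => ‖w‖ ^ 2 * J w) Q2 volume := by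
    apply Integrable.mono' ((hJ_int.const_mul ((N : ℝ) * (2 * δ) ^ 2)).restrict (s := Q2))
    · exact ((continuous_norm.pow 2).measurable.mul hJ_meas).aestronglyMeasurable
    · rw [ae_restrict_iff' hQ2m]
      refine ae_of_all _ fun w hw => ?_
      have h1 : ‖w‖ ^ 2 = ∑ i, |w i| ^ 2 := by
        rw [EuclideanSpace.norm_eq, Real.sq_sqrt (by positivity)]
        simp [Real.norm_eq_abs]
      have h2 : ‖w‖ ^ 2 ≤ (N : ℝ) * (2 * δ) ^ 2 := by
        rw [h1]
        calc (∑ i, |w i| ^ 2) ≤ ∑ _i : Fin N, (2 * δ) ^ 2 :=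
              Finset.sum_le_sum fun i _ => pow_le_pow_left₀ (abs_nonneg _) (hw i) 2
          _ = (N : ℝ) * (2 * δ) ^ 2 := by simp [mul_comm]
      have h3 : (0:ℝ) ≤ ‖w‖ ^ 2 * J w := mul_nonneg (by positivity) (hJ_nonneg w)
      rw [Real.norm_eq_abs, abs_of_nonneg h3]
      exact mul_le_mul_of_nonneg_right h2 (hJ_nonneg w)
  have hMom : (∫⁻ w in Q2, n w * j w) ≤ ENNReal.ofReal ((2 * δ) ^ 2) := by
    have hMomEq : (∫⁻ w in Q2, n w * j w)
        = ENNReal.ofReal (∫ w in Q2, ‖w‖ ^ 2 * J w) := by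
      rw [ofReal_integral_eq_lintegral_ofReal hint2
        (ae_of_all _ fun w => mul_nonneg (by positivity) (hJ_nonneg w))]
      apply lintegral_congr
      intro w
      rw [hn, hj, ENNReal.ofReal_mul (by positivity)]
    rw [hMomEq]
    apply ENNReal.ofReal_le_ofReal
    calc (∫ w in Q2, ‖w‖ ^ 2 * J w) ≤ (2 * δ) ^ 2 * ∫ z, J z := hJ_mom
      _ = (2 * δ) ^ 2 := by rw [hJ_tot, mul_one]
  -- time-slice integral
  set T : EuclideanSpace ℝ (Fin N) → EuclideanSpace ℝ (Fin N) → ℝ≥0∞ :=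
    fun y w => ∫⁻ θ in Ioc (0:ℝ) 1, g (y + θ • w) with hT
  set Ψ : EuclideanSpace ℝ (Fin N) → EuclideanSpace ℝ (Fin N) → ℝ≥0∞ :=
    fun y w => Q.indicator 1 y * (Q.indicator 1 (w + y) * ((n w * j w) * T y w)) with hΨ
  -- step B: pointwise bound after ofReal-splitting
  have hB : ∀ y, (∫⁻ z in Q, φ y z)
      ≤ ∫⁻ z in Q, (n (z - y) * j (z - y)) * T y (z - y) := by
    intro y
    apply lintegral_mono
    intro z
    have hpb := pointwise_bound hv y z
    calc φ y z = ENNReal.ofReal ((v y - v z) ^ 2) * j (z - y) := by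
          simp only [hφ, hj]
          rw [ENNReal.ofReal_mul (sq_nonneg _)]
      _ ≤ (n (z - y) * T y (z - y)) * j (z - y) := mul_le_mul_left hpb _
      _ = (n (z - y) * j (z - y)) * T y (z - y) := by ring
  -- step C: change of variables z = w + y
  have hC : ∀ y, (∫⁻ z in Q, (n (z - y) * j (z - y)) * T y (z - y))
      = ∫⁻ w, Q.indicator 1 (w + y) * ((n w * j w) * T y w) := by
    intro y
    rw [← lintegral_indicator hQm]
    rw [← lintegral_add_right_eq_self
      (fun z => Q.indicator (fun z => (n (z - y) * j (z - y)) * T y (z - y)) z) y]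
    apply lintegral_congr
    intro w
    by_cases hwy : w + y ∈ Q
    · simp [Set.indicator_apply, hwy, add_sub_cancel_right]
    · simp [Set.indicator_apply, hwy]
  -- step D1: to full-space double integral
  have hD1 : (∫⁻ y in Q, ∫⁻ z in Q, φ y z) ≤ ∫⁻ y, ∫⁻ w, Ψ y w := by
    calc (∫⁻ y in Q, ∫⁻ z in Q, φ y z)
        ≤ ∫⁻ y in Q, ∫⁻ z in Q, (n (z - y) * j (z - y)) * T y (z - y) :=
          lintegral_mono fun y => hB y
      _ = ∫⁻ y in Q, ∫⁻ w, Q.indicator 1 (w + y) * ((n w * j w) * T y w) :=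
          lintegral_congr fun y => hC y
      _ = ∫⁻ y, ∫⁻ w, Ψ y w := by
          rw [← lintegral_indicator hQm]
          apply lintegral_congr
          intro y
          by_cases hy : y ∈ Q
          · simp [hΨ, Set.indicator_apply, hy]
          · simp [hΨ, Set.indicator_apply, hy]
  -- measurability for the swap
  have hTm : Measurable fun p : EuclideanSpace ℝ (Fin N) × EuclideanSpace ℝ (Fin N) =>
      ∫⁻ θ in Ioc (0:ℝ) 1, g (p.1 + θ • p.2) := by
    have hc2 : Continuous fun q :
        (EuclideanSpace ℝ (Fin N) × EuclideanSpace ℝ (Fin N)) × ℝ =>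
        q.1.1 + q.2 • q.1.2 :=
      (continuous_fst.comp continuous_fst).add
        (continuous_snd.smul (continuous_snd.comp continuous_fst))
    exact Measurable.lintegral_prod_right' (ν := volume.restrict (Ioc (0:ℝ) 1))
      (f := fun q : (EuclideanSpace ℝ (Fin N) × EuclideanSpace ℝ (Fin N)) × ℝ =>
        g (q.1.1 + q.2 • q.1.2))
      ((hgc.comp hc2).measurable)
  have hΨm : AEMeasurable (Function.uncurry Ψ) ((volume : Measure (EuclideanSpace ℝ (Fin N))).prod volume) := by
    apply Measurable.aemeasurable
    apply Measurable.mul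
    · exact (measurable_one.indicator hQm).comp measurable_fst
    · apply Measurable.mul
      · exact (measurable_one.indicator hQm).comp (measurable_snd.add measurable_fst)
      · exact (((hnm.comp measurable_snd).mul (hjm.comp measurable_snd)).mul hTm)
  have hD2 : (∫⁻ y, ∫⁻ w, Ψ y w) = ∫⁻ w, ∫⁻ y, Ψ y w :=
    lintegral_lintegral_swap hΨm
  -- step E
  have hindne : ∀ s : Set (EuclideanSpace ℝ (Fin N)), ∀ u,
      s.indicator (1 : EuclideanSpace ℝ (Fin N) → ℝ≥0∞) u ≠ ⊤ := by
    intro s u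
    by_cases hu : u ∈ s <;> simp [Set.indicator_apply, hu]
  have hE : ∀ w, (∫⁻ y, Ψ y w) ≤ Q2.indicator 1 w * ((n w * j w) * G) := by
    intro w
    by_cases hw : w ∈ Q2
    · -- the substantial case
      have key : ∀ θ ∈ Ioc (0:ℝ) 1,
          (∫⁻ y, Q.indicator 1 y * (Q.indicator 1 (w + y) * g (y + θ • w))) ≤ G := by
        intro θ hθ
        have h0 : (0:ℝ) ≤ θ := le_of_lt hθ.1
        have h1 : θ ≤ 1 := hθ.2
        calc (∫⁻ y, Q.indicator 1 y * (Q.indicator 1 (w + y) * g (y + θ • w)))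
            = ∫⁻ u, Q.indicator 1 (u + -(θ • w)) *
                (Q.indicator 1 (w + (u + -(θ • w))) * g ((u + -(θ • w)) + θ • w)) :=
              (lintegral_add_right_eq_self
                (fun y => Q.indicator 1 y * (Q.indicator 1 (w + y) * g (y + θ • w)))
                (-(θ • w))).symm
          _ ≤ ∫⁻ u, Q.indicator g u := by
              apply lintegral_mono
              intro u
              by_cases hu1 : u + -(θ • w) ∈ Q
              · by_cases hu2 : w + (u + -(θ • w)) ∈ Q
                · have huQ : u ∈ Q := by
                    intro i
                    have e1 := hu1 i
                    have e2 := hu2 i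
                    have c1 : (u + -(θ • w)) i = u i - θ * w i := by simp; ring
                    have c2 : (w + (u + -(θ • w))) i = w i + (u i - θ * w i) := by
                      simp; ring
                    rw [c1] at e1
                    rw [c2] at e2
                    have hrw : u i - x i
                        = (1 - θ) * (u i - θ * w i - x i)
                          + θ * (w i + (u i - θ * w i) - x i) := by ring
                    calc |u i - x i|
                        ≤ (1 - θ) * |u i - θ * w i - x i|
                          + θ * |w i + (u i - θ * w i) - x i| := by
                          rw [hrw]
                          refine (abs_add_le _ _).trans ?_
                          rw [abs_mul, abs_mul, abs_of_nonneg (by linarith),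
                            abs_of_nonneg h0]
                      _ ≤ (1 - θ) * δ + θ * δ := by
                          have := mul_le_mul_of_nonneg_left e1 (by linarith : (0:ℝ) ≤ 1 - θ)
                          have := mul_le_mul_of_nonneg_left e2 h0
                          linarith
                      _ = δ := by ring
                  have harg : (u + -(θ • w)) + θ • w = u := by abel
                  simp [Set.indicator_apply, hu1, hu2, huQ, harg]
                · simp [Set.indicator_apply, hu2]
              · simp [Set.indicator_apply, hu1]
          _ = G := lintegral_indicator hQm g
      have hswap2 : (∫⁻ y, (Q.indicator 1 y * Q.indicator 1 (w + y)) * T y w)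
          = ∫⁻ θ in Ioc (0:ℝ) 1,
              ∫⁻ y, (Q.indicator 1 y * Q.indicator 1 (w + y)) * g (y + θ • w) := by
        calc (∫⁻ y, (Q.indicator 1 y * Q.indicator 1 (w + y)) * T y w)
            = ∫⁻ y, ∫⁻ θ in Ioc (0:ℝ) 1,
                (Q.indicator 1 y * Q.indicator 1 (w + y)) * g (y + θ • w) := by
              apply lintegral_congr
              intro y
              exact (lintegral_const_mul' _ _
                (ENNReal.mul_ne_top (hindne Q y) (hindne Q (w + y)))).symm
          _ = _ := by
              apply lintegral_lintegral_swap
              apply Measurable.aemeasurable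
              apply Measurable.mul
              · apply Measurable.mul
                · exact (measurable_one.indicator hQm).comp measurable_fst
                · exact (measurable_one.indicator hQm).comp
                    ((measurable_const.add measurable_fst) :
                      Measurable fun p : EuclideanSpace ℝ (Fin N) × ℝ => w + p.1)
              · exact (hgc.comp (by fun_prop :
                  Continuous fun p : EuclideanSpace ℝ (Fin N) × ℝ =>
                    p.1 + p.2 • w)).measurable
      calc (∫⁻ y, Ψ y w)
          = ∫⁻ y, (n w * j w) * ((Q.indicator 1 y * Q.indicator 1 (w + y)) * T y w) := by
            apply lintegral_congr
            intro y
            rw [hΨ]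
            ring
        _ = (n w * j w) * ∫⁻ y, (Q.indicator 1 y * Q.indicator 1 (w + y)) * T y w :=
            lintegral_const_mul' _ _ (hnjne w)
        _ ≤ (n w * j w) * G := by
            apply mul_le_mul_right
            rw [hswap2]
            calc (∫⁻ θ in Ioc (0:ℝ) 1,
                  ∫⁻ y, (Q.indicator 1 y * Q.indicator 1 (w + y)) * g (y + θ • w))
                ≤ ∫⁻ _θ in Ioc (0:ℝ) 1, G := by
                  apply setLIntegral_mono measurable_const
                  intro θ hθ
                  refine le_trans (le_of_eq ?_) (key θ hθ)
                  apply lintegral_congr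
                  intro y
                  ring
              _ = G := by rw [setLIntegral_const]; simp
        _ = Q2.indicator 1 w * ((n w * j w) * G) := by
            simp [Set.indicator_apply, hw]
    · -- w outside the double cube
      have hzero : ∀ y, Ψ y w = 0 := by
        intro y
        by_cases hy : y ∈ Q
        · by_cases hwy : w + y ∈ Q
          · exfalso
            apply hw
            intro i
            have e1 := hy i
            have e2 := hwy i
            have c : (w + y) i = w i + y i := by simp
            rw [c] at e2
            have h3 := abs_sub (w i + y i - x i) (y i - x i)
            have h4 : w i + y i - x i - (y i - x i) = w i := by ring
            rw [h4] at h3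
            linarith
          · simp [hΨ, Set.indicator_apply, hwy]
        · simp [hΨ, Set.indicator_apply, hy]
      simp [hzero]
  -- step F / combine
  have hF : (∫⁻ w, Q2.indicator 1 w * ((n w * j w) * G))
      = (∫⁻ w in Q2, n w * j w) * G := by
    calc (∫⁻ w, Q2.indicator 1 w * ((n w * j w) * G))
        = ∫⁻ w, Q2.indicator (fun w => (n w * j w) * G) w := by
          apply lintegral_congr
          intro w
          by_cases hw : w ∈ Q2 <;> simp [Set.indicator_apply, hw]
      _ = ∫⁻ w in Q2, (n w * j w) * G := lintegral_indicator hQ2m _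
      _ = (∫⁻ w in Q2, n w * j w) * G := lintegral_mul_const' G _ hGne
  have hL : (∫⁻ y in Q, ∫⁻ z in Q, φ y z) ≤ ENNReal.ofReal ((2 * δ) ^ 2) * G := by
    calc (∫⁻ y in Q, ∫⁻ z in Q, φ y z)
        ≤ ∫⁻ y, ∫⁻ w, Ψ y w := hD1
      _ = ∫⁻ w, ∫⁻ y, Ψ y w := hD2
      _ ≤ ∫⁻ w, Q2.indicator 1 w * ((n w * j w) * G) := lintegral_mono hE
      _ = (∫⁻ w in Q2, n w * j w) * G := hF
      _ ≤ ENNReal.ofReal ((2 * δ) ^ 2) * G := mul_le_mul_left hMom G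
  -- wrap-up: back to Bochner integrals
  have hinner : ∀ y, (∫ z in Q, (v y - v z) ^ 2 * J (z - y))
      = (∫⁻ z in Q, φ y z).toReal := by
    intro y
    apply integral_eq_lintegral_of_nonneg_ae
    · exact ae_of_all _ fun z => mul_nonneg (sq_nonneg _) (hJ_nonneg _)
    · exact (((continuous_const.sub hv.continuous).measurable.pow_const 2).mul
        (hJ_meas.comp (measurable_id.sub measurable_const))).aestronglyMeasurable
  have hIzm : Measurable fun y => ∫⁻ z in Q, φ y z :=
    Measurable.lintegral_prod_right (f := φ) hφm
  have houter : (∫ y in Q, ∫ z in Q, (v y - v z) ^ 2 * J (z - y))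
      = (∫⁻ y in Q, ENNReal.ofReal ((∫⁻ z in Q, φ y z).toReal)).toReal := by
    rw [show (fun y => ∫ z in Q, (v y - v z) ^ 2 * J (z - y))
        = fun y => (∫⁻ z in Q, φ y z).toReal from funext hinner]
    apply integral_eq_lintegral_of_nonneg_ae
    · exact ae_of_all _ fun y => ENNReal.toReal_nonneg
    · exact hIzm.ennreal_toReal.aestronglyMeasurable
  have hfin : ENNReal.ofReal ((2 * δ) ^ 2) * G ≠ ⊤ :=
    ENNReal.mul_ne_top ENNReal.ofReal_ne_top hGne
  have hle : (∫⁻ y in Q, ENNReal.ofReal ((∫⁻ z in Q, φ y z).toReal))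
      ≤ ENNReal.ofReal ((2 * δ) ^ 2) * G :=
    le_trans (lintegral_mono fun y => ENNReal.ofReal_toReal_le) hL
  calc (∫ y in Q, ∫ z in Q, (v y - v z) ^ 2 * J (z - y))
      = (∫⁻ y in Q, ENNReal.ofReal ((∫⁻ z in Q, φ y z).toReal)).toReal := houter
    _ ≤ (ENNReal.ofReal ((2 * δ) ^ 2) * G).toReal := ENNReal.toReal_mono hfin hle
    _ = (2 * δ) ^ 2 * R := by
        rw [hGR, ← ENNReal.ofReal_mul (by positivity),
          ENNReal.toReal_ofReal (mul_nonneg (by positivity) hRnn)]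
end
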